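/- No proper D-set is isomorphic to the set of leaves of a graph-theoretic tree with the path-disjointness D-relation. -/

import Mathlib

/-- A D-relation: 4-ary relation satisfying axioms (D1)-(D4). -/
structure IsDRel {α : Type*} (D : α → α → α → α → Prop) : Prop where
  d1 : ∀ w x y z : α, D w x y z → D x w y z ∧ D y z w x
  d2 : ∀ w x y z : α, D w x y z → ¬ D w y x z
  d3 : ∀ w x y z : α, D w x y z → ∀ v, D v x y z ∨ D w x y v
  d4 : ∀ w x y z : α, w ≠ y → x ≠ y → D w x y y

/-- No proper D-set is isomorphic to the set of leaves of a graph-theoretic tree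
with the path-disjointness D-relation. -/
theorem proper_dset_not_tree_leaves {α : Type*} {D : α → α → α → α → Prop}
    (hD : IsDRel D)
    (hcard : ∃ x y z : α, x ≠ y ∧ x ≠ z ∧ y ≠ z)
    (hproper : ∀ w x y : α, w ≠ x → w ≠ y → x ≠ y → ∃ z, z ≠ y ∧ D w x y z)
    {V : Type*} (G : SimpleGraph V) (hT : G.IsTree) :
    ¬ ∃ φ : α → V, Function.Injective φ ∧
      (∀ v : V, (∃! u, G.Adj v u) ↔ ∃ a, φ a = v) ∧
      (∀ a b c d : α, D a b c d ↔
        ∀ (p : G.Walk (φ a) (φ b)) (q : G.Walk (φ c) (φ d)), p.IsPath → q.IsPath →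
          ∀ v : V, v ∈ p.support → v ∉ q.support) := by
  classical
  rintro ⟨φ, hinj, hleaf, hiff⟩
  obtain ⟨x0, y0, z0, hxy, hxz, hyz⟩ := hcard
  have hpath : ∀ u w : V, ∃ p : G.Walk u w, p.IsPath := fun u w =>
    ⟨(hT.isConnected u w).some.bypass, SimpleGraph.Walk.bypass_isPath _⟩
  have hleafA : ∀ t : α, ∃! s, G.Adj (φ t) s := fun t => (hleaf (φ t)).mpr ⟨t, rfl⟩
  set I : V → Prop := fun u => ∀ z : α, z ≠ z0 → ∀ q : G.Walk (φ z0) (φ z), q.IsPath →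
    u ∈ q.support with hI_def
  have factB : ∀ u : V, I u → ∀ a b : α, a ≠ b → a ≠ z0 → b ≠ z0 →
      ∀ p : G.Walk (φ a) (φ b), p.IsPath → u ∉ p.support := by
    intro u hIu a b hab haz hbz p hp hu
    obtain ⟨z', hz', hd⟩ := hproper a b z0 hab haz hbz
    obtain ⟨q, hq⟩ := hpath (φ z0) (φ z')
    exact (hiff a b z0 z').mp hd p q hp hq u hu (hIu z' hz' q hq)
  -- main induction
  have main : ∀ (u w : V) (P2 : G.Walk u w), P2.IsPath → w = φ x0 → I u → False := by
    intro u w P2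
    induction P2 with
    | nil =>
      intro _ hw hIu
      subst hw
      obtain ⟨p, hp⟩ := hpath (φ x0) (φ y0)
      exact factB _ hIu x0 y0 hxy hxz hyz p hp p.start_mem_support
    | @cons u v w h P2' ih =>
      intro hp hw hIu
      rw [SimpleGraph.Walk.cons_isPath_iff] at hp
      obtain ⟨hp', huP2'⟩ := hp
      apply ih hp' hw
      -- show I v
      intro z hz q hq
      have huq : u ∈ q.support := hIu z hz q hq
      -- u ≠ φ x0
      have huA : u ≠ φ x0 := by
        rintro rfl
        subst hw
        exact huP2' P2'.end_mem_support
      by_cases huz : u = φ z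
      · -- u is the endpoint leaf φ z; penultimate vertex of q is its unique neighbor = v
        have hzz0 : φ z ≠ φ z0 := fun hc => hz (hinj hc)
        have hrev : (q.reverse).IsPath := hq.reverse
        obtain ⟨s, h2, q2', hq2'⟩ :=
          SimpleGraph.Walk.exists_eq_cons_of_ne (huz ▸ huz ▸ hzz0) q.reverse
        have hsv : s = v := by
          obtain ⟨t, _, ht⟩ := hleafA z
          rw [ht s (by exact h2), ht v (huz ▸ h)]
        have : s ∈ q.reverse.support := by
          rw [hq2']
          exact List.mem_cons_of_mem _ q2'.start_mem_support
        rw [SimpleGraph.Walk.support_reverse] at this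
        exact hsv ▸ (List.mem_reverse.mp this)
      · -- u interior; drop until u
        have q2 := q.dropUntil u huq
        have hq2 : (q.dropUntil u huq).IsPath := hq.dropUntil huq
        obtain ⟨s, h2, q2'', hq2''⟩ :=
          SimpleGraph.Walk.exists_eq_cons_of_ne huz (q.dropUntil u huq)
        have hsub := SimpleGraph.Walk.support_dropUntil_subset q huq
        have hsq : s ∈ (q.dropUntil u huq).support := by
          rw [hq2'']; exact List.mem_cons_of_mem _ q2''.start_mem_support
        by_cases hsv : s = v
        · exact hsub (hsv ▸ hsq)
        · exfalso
          rw [hq2''] at hq2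
          rw [SimpleGraph.Walk.cons_isPath_iff] at hq2
          obtain ⟨hq2''p, huq2''⟩ := hq2
          subst hw
          -- uniqueness of second vertex: any vertex in both P2'.support and q2''.support gives contra
          have key : ∀ w', w' ∈ P2'.support → w' ∈ q2''.support → False := by
            intro w' hw1 hw2
            have ht1 : (SimpleGraph.Walk.cons h (P2'.takeUntil w' hw1)).IsPath := by
              rw [SimpleGraph.Walk.cons_isPath_iff]
              exact ⟨hp'.takeUntil hw1,
                fun hc => huP2' (SimpleGraph.Walk.support_takeUntil_subset _ hw1 hc)⟩
            have ht2 : (SimpleGraph.Walk.cons h2 (q2''.takeUntil w' hw2)).IsPath := by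
              rw [SimpleGraph.Walk.cons_isPath_iff]
              exact ⟨hq2''p.takeUntil hw2,
                fun hc => huq2'' (SimpleGraph.Walk.support_takeUntil_subset _ hw2 hc)⟩
            have heq := congrArg Subtype.val
              (hT.IsAcyclic.path_unique ⟨_, ht1⟩ ⟨_, ht2⟩)
            have h1 := congrArg (fun r : G.Walk u w' => r.getVert 1) heq
            simp only [SimpleGraph.Walk.getVert_cons_succ,
              SimpleGraph.Walk.getVert_zero] at h1
            exact hsv h1.symm
          -- z ≠ x0
          have hzx : φ z ≠ φ x0 := fun hc =>
            key (φ x0) P2'.end_mem_support (hc ▸ q2''.end_mem_support)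
          have hzx' : x0 ≠ z := fun e => hzx (congrArg φ e.symm)
          have hconsP : (SimpleGraph.Walk.cons h P2').IsPath :=
            (SimpleGraph.Walk.cons_isPath_iff _ _).mpr ⟨hp', huP2'⟩
          have htail : (q.dropUntil u huq).support.tail = q2''.support := by
            rw [hq2'', SimpleGraph.Walk.support_cons]; rfl
          have hWp : ((SimpleGraph.Walk.cons h P2').reverse.append
              (q.dropUntil u huq)).IsPath := by
            apply SimpleGraph.Walk.IsPath.mk'
            rw [SimpleGraph.Walk.support_append, List.nodup_append]
            refine ⟨?_, ?_, ?_⟩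
            · rw [SimpleGraph.Walk.support_reverse, List.nodup_reverse]
              exact hconsP.support_nodup
            · rw [htail]; exact hq2''p.support_nodup
            · intro w' hw1 w'' hw2 hweq
              subst hweq
              rw [htail] at hw2
              rw [SimpleGraph.Walk.support_reverse, List.mem_reverse,
                SimpleGraph.Walk.support_cons, List.mem_cons] at hw1
              rcases hw1 with hw1' | hw1'
              · exact huq2'' (hw1' ▸ hw2)
              · exact key w' hw1' hw2
          have huW : u ∈ ((SimpleGraph.Walk.cons h P2').reverse.append
              (q.dropUntil u huq)).support := by
            rw [SimpleGraph.Walk.support_append]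
            apply List.mem_append_left
            rw [SimpleGraph.Walk.support_reverse, List.mem_reverse]
            exact (SimpleGraph.Walk.cons h P2').start_mem_support
          exact factB u hIu x0 z hzx' hxz hz _ hWp huW
  obtain ⟨P, hP⟩ := hpath (φ z0) (φ x0)
  exact main _ _ P hP rfl (fun z hz q hq => q.start_mem_support)
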